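/- If X is a Baire Hausdorff space, Y is a σ-locally compact space, and f : X → Y has a closed graph, then the set C(f) of continuity points of f is an open dense subset of X. -/
import Mathlib

open Filter Set Topology

private lemma cluster_eq_of_closedGraph {X Y : Type*} [TopologicalSpace X]
    [TopologicalSpace Y] {f : X → Y} (hf : IsClosed {p : X × Y | p.2 = f p.1})
    {x : X} {y : Y} {l : Filter X} [l.NeBot] (hl : l ≤ 𝓝 x)
    (hy : ClusterPt y (Filter.map f l)) : y = f x := by
  set m := l ⊓ Filter.comap f (𝓝 y) with hm
  have hmap : Filter.map f m = Filter.map f l ⊓ 𝓝 y := Filter.push_pull f l (𝓝 y)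
  have hne : (Filter.map f m).NeBot := by
    rw [hmap, inf_comm]; exact hy
  have hmne : m.NeBot := by
    rwa [Filter.map_neBot_iff] at hne
  have ht : Filter.Tendsto (fun z => (z, f z)) m (𝓝 (x, y)) := by
    rw [nhds_prod_eq]
    exact Filter.Tendsto.prodMk (le_trans inf_le_left hl)
      (Filter.tendsto_iff_comap.2 inf_le_right)
  have : (x, y) ∈ {p : X × Y | p.2 = f p.1} :=
    hf.mem_of_tendsto ht (Filter.Eventually.of_forall fun z => rfl)
  exact this

private lemma continuousAt_of_mapsTo_compact {X Y : Type*} [TopologicalSpace X]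
    [TopologicalSpace Y] {f : X → Y} (hf : IsClosed {p : X × Y | p.2 = f p.1})
    {x : X} {V : Set X} {K : Set Y} (hV : V ∈ 𝓝 x) (hVK : Set.MapsTo f V K)
    (hK : IsCompact K) : ContinuousAt f x := by
  rw [ContinuousAt, Filter.tendsto_iff_ultrafilter]
  intro G hG
  have hKG : K ∈ (G.map f : Filter Y) := by
    rw [Ultrafilter.coe_map, Filter.mem_map]
    exact Filter.mem_of_superset (hG hV) fun z (hz : z ∈ V) => hVK hz
  obtain ⟨y, hyK, hGy⟩ := hK.ultrafilter_le_nhds (G.map f) (Filter.le_principal_iff.2 hKG)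
  have hGle : (G.map f : Filter Y) ≤ Filter.map f (𝓝 x) := by
    rw [Ultrafilter.coe_map]
    exact Filter.map_mono hG
  have hcl : ClusterPt y (Filter.map f (𝓝 x)) := Filter.neBot_of_le (le_inf hGy hGle)
  have hyx := cluster_eq_of_closedGraph hf (le_refl (𝓝 x)) hcl
  have : (G.map f : Filter Y) ≤ 𝓝 (f x) := by rwa [hyx] at hGy
  rwa [Ultrafilter.coe_map] at this

private lemma mem_of_mem_closure_preimage {X Y : Type*} [TopologicalSpace X]
    [TopologicalSpace Y] {f : X → Y} (hf : IsClosed {p : X × Y | p.2 = f p.1})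
    {K : Set Y} (hK : IsCompact K) {x : X} (hx : x ∈ closure (f ⁻¹' K)) : f x ∈ K := by
  have hne : (𝓝 x ⊓ 𝓟 (f ⁻¹' K)).NeBot := mem_closure_iff_clusterPt.1 hx
  have hle : Filter.map f (𝓝 x ⊓ 𝓟 (f ⁻¹' K)) ≤ 𝓟 K := by
    rw [Filter.le_principal_iff]
    exact Filter.mem_map.2 (Filter.mem_inf_of_right (Filter.mem_principal_self _))
  obtain ⟨y, hyK, hcl⟩ := hK hle
  rwa [cluster_eq_of_closedGraph hf inf_le_left hcl] at hyK

theorem closed_graph_continuity_points_open_dense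
    {X Y : Type*} [TopologicalSpace X] [BaireSpace X] [T2Space X]
    [TopologicalSpace Y] [LocallyCompactSpace Y] [SigmaCompactSpace Y]
    (f : X → Y) (hf : IsClosed {p : X × Y | p.2 = f p.1}) :
    IsOpen {x : X | ContinuousAt f x} ∧ Dense {x : X | ContinuousAt f x} := by
  have key : ∀ (K : Set Y), IsCompact K →
      interior (closure (f ⁻¹' K)) ⊆ {x : X | ContinuousAt f x} := by
    intro K hK z hz
    exact continuousAt_of_mapsTo_compact hf
      ((isOpen_interior.mem_nhds hz))
      (fun w hw => mem_of_mem_closure_preimage hf hK (interior_subset hw)) hK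
  constructor
  · rw [isOpen_iff_mem_nhds]
    intro x hx
    obtain ⟨K, hK, hKx⟩ := exists_compact_mem_nhds (f x)
    have h1 : f ⁻¹' K ∈ 𝓝 x := hx hKx
    have h2 : x ∈ interior (closure (f ⁻¹' K)) :=
      interior_mono subset_closure (mem_interior_iff_mem_nhds.2 h1)
    exact Filter.mem_of_superset (isOpen_interior.mem_nhds h2) (key K hK)
  · have hcov : ⋃ n, closure (f ⁻¹' compactCovering Y n) = univ := by
      apply Set.eq_univ_of_univ_subset
      calc univ = f ⁻¹' univ := rfl
        _ = f ⁻¹' ⋃ n, compactCovering Y n := by rw [iUnion_compactCovering]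
        _ = ⋃ n, f ⁻¹' compactCovering Y n := by rw [preimage_iUnion]
        _ ⊆ ⋃ n, closure (f ⁻¹' compactCovering Y n) :=
          iUnion_mono fun n => subset_closure
    have hd : Dense (⋃ n, interior (closure (f ⁻¹' compactCovering Y n))) :=
      dense_iUnion_interior_of_closed (fun n => isClosed_closure) hcov
    exact hd.mono (iUnion_subset fun n => key _ (isCompact_compactCovering Y n))
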